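/- Let r ≥ 1 be an integer and let x, y ∈ o be such that x² − bxy + acy² ∈ o^× (so t(x,y) ∈ T(F) ∩ GL₂(o)). Then t(x,y) ∈ B(F)·K₂(p^r) if and only if a·y ∈ p^r and x − by ∈ o^×. -/

import Mathlib

open scoped Pointwise
open Matrix

noncomputable section

abbrev Zm0 : Type := WithZero (Multiplicative ℤ)

/-- `ev n` is the value (in `ℤₘ₀ = WithZero (Multiplicative ℤ)`) of an element of additive
valuation `n`; thus `x ∈ 𝔭^n` iff `v x ≤ ev n`, `x ∈ 𝔬` iff `v x ≤ ev 0`, and `x ∈ 𝔬^×` iff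
`v x = ev 0`. -/
def ev (n : ℤ) : Zm0 := ((Multiplicative.ofAdd (-n) : Multiplicative ℤ) : Zm0)

lemma ev_zero : ev 0 = 1 := by simp [ev]

lemma ev_le_ev {m n : ℤ} : ev m ≤ ev n ↔ n ≤ m := by
  rw [ev, ev, WithZero.coe_le_coe, Multiplicative.ofAdd_le, neg_le_neg_iff]

lemma ev_lt_ev {m n : ℤ} : ev m < ev n ↔ n < m := by
  rw [ev, ev, WithZero.coe_lt_coe, Multiplicative.ofAdd_lt, neg_lt_neg_iff]

variable {F : Type*} [Field F]

/-- the matrix t(x,y) = [[x, cy],[−ay, x−by]] -/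
def tmat (a b c x y : F) : Matrix (Fin 2) (Fin 2) F :=
  !![x, c * y; -(a * y), x - b * y]

/-- GL₂(𝔬) : integral entries and unit determinant -/
def GL2O (v : Valuation F Zm0) : Set (Matrix (Fin 2) (Fin 2) F) :=
  {g | (∀ i j, v (g i j) ≤ ev 0) ∧ v g.det = ev 0}

/-- K₂(𝔭ⁿ) = { g ∈ GL₂(𝔬) : g₁₁ ∈ 1 + 𝔭ⁿ, g₂₂ ∈ 1 + 𝔭ⁿ, g₂₁ ∈ 𝔭ⁿ } -/
def K2 (v : Valuation F Zm0) (n : ℕ) : Set (Matrix (Fin 2) (Fin 2) F) :=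
  {g | g ∈ GL2O v ∧ v (g 0 0 - 1) ≤ ev n ∧ v (g 1 1 - 1) ≤ ev n ∧ v (g 1 0) ≤ ev n}

/-- B(F): invertible upper triangular matrices -/
def BF (F : Type*) [Field F] : Set (Matrix (Fin 2) (Fin 2) F) :=
  {g | g 1 0 = 0 ∧ g.det ≠ 0}

/-- Let r ≥ 1 and x, y ∈ 𝔬 with x² − bxy + acy² ∈ 𝔬^×
(so t(x,y) ∈ T(F) ∩ GL₂(𝔬)).  Then t(x,y) ∈ B(F)·K₂(𝔭^r) iff a·y ∈ 𝔭^r and x − by ∈ 𝔬^×. -/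
theorem stmt4
    (v : Valuation F Zm0) (ϖ : F) (hϖ : v ϖ = ev 1)
    (a b c : F)
    (hao : v a ≤ ev 0) (hbo : v b ≤ ev 0) (hc : v c = ev 0)
    (hd0 : b ^ 2 - 4 * (a * c) ≠ 0)
    (r : ℕ) (hr : 1 ≤ r)
    (x y : F) (hx : v x ≤ ev 0) (hy : v y ≤ ev 0)
    (hdet : v (x ^ 2 - b * x * y + a * c * y ^ 2) = ev 0) :
    tmat a b c x y ∈ BF F * K2 v r ↔ (v (a * y) ≤ ev r ∧ v (x - b * y) = ev 0) := by
  have hevr_le : ev (r : ℤ) ≤ ev 0 := ev_le_ev.2 (by exact_mod_cast Nat.zero_le r)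
  have hevr_lt : ev (r : ℤ) < ev 0 := ev_lt_ev.2 (by exact_mod_cast hr)
  have hdetne : (x ^ 2 - b * x * y + a * c * y ^ 2) ≠ 0 := by
    intro h; rw [h] at hdet; simp [ev_zero] at hdet
  have hsplit : x ^ 2 - b * x * y + a * c * y ^ 2 = x * (x - b * y) + a * c * y ^ 2 := by ring
  constructor
  · rintro hmem
    rw [Set.mem_mul] at hmem
    obtain ⟨B, hB, k, hk, hBk⟩ := hmem
    have h10 : B 1 1 * k 1 0 = -(a * y) := by
      have := congrFun (congrFun hBk 1) 0
      simpa [tmat, Matrix.mul_apply, Fin.sum_univ_two, hB.1] using this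
    have h11 : B 1 1 * k 1 1 = x - b * y := by
      have := congrFun (congrFun hBk 1) 1
      simpa [tmat, Matrix.mul_apply, Fin.sum_univ_two, hB.1] using this
    -- k 1 1 is a unit
    have hk11 : v (k 1 1) = ev 0 := by
      have hlt1 : v (k 1 1 - 1) < ev 0 := lt_of_le_of_lt hk.2.2.1 hevr_lt
      have h1 : v (1 : F) = ev 0 := by rw [v.map_one, ev_zero]
      have hne : v (1 : F) ≠ v (k 1 1 - 1) := by rw [h1]; exact (ne_of_lt hlt1).symm
      have h := v.map_add_of_distinct_val hne
      rw [show (1 : F) + (k 1 1 - 1) = k 1 1 from by ring] at h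
      rw [h, h1, sup_eq_left.2 (le_of_lt hlt1)]
    have hB11 : v (B 1 1) = v (x - b * y) := by
      rw [← h11, v.map_mul, hk11, ev_zero, mul_one]
    have hay : v (a * y) ≤ v (x - b * y) * ev r := by
      calc v (a * y) = v (-(a * y)) := (v.map_neg _).symm
        _ = v (B 1 1) * v (k 1 0) := by rw [← h10, v.map_mul]
        _ ≤ v (x - b * y) * ev r := by rw [hB11]; exact mul_le_mul_right hk.2.2.2 _
    have hby : v (b * y) ≤ ev 0 := by
      calc v (b * y) = v b * v y := v.map_mul _ _
        _ ≤ ev 0 * ev 0 := mul_le_mul' hbo hy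
        _ = ev 0 := by rw [ev_zero, one_mul]
    have hxby_le : v (x - b * y) ≤ ev 0 :=
      le_trans (v.map_sub _ _) (sup_le hx hby)
    have hxby : v (x - b * y) = ev 0 := by
      rcases lt_or_eq_of_le hxby_le with hlt | heq
      · exfalso
        have h1 : v (x * (x - b * y)) < ev 0 := by
          rw [v.map_mul]
          calc v x * v (x - b * y) ≤ ev 0 * v (x - b * y) := mul_le_mul_left hx _
            _ = v (x - b * y) := by rw [ev_zero, one_mul]
            _ < ev 0 := hlt
        have h2 : v (a * c * y ^ 2) < ev 0 := by
          have : v (a * c * y ^ 2) = v (a * y) * (v c * v y) := by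
            rw [← v.map_mul, ← v.map_mul]; ring_nf
          rw [this]
          calc v (a * y) * (v c * v y) ≤ (v (x - b * y) * ev r) * (1 * 1) :=
                mul_le_mul' hay (mul_le_mul' (le_of_eq (hc.trans ev_zero)) (ev_zero ▸ hy))
            _ = v (x - b * y) * ev r := by rw [mul_one, mul_one]
            _ ≤ v (x - b * y) * ev 0 := mul_le_mul_right hevr_le _
            _ = v (x - b * y) := by rw [ev_zero, mul_one]
            _ < ev 0 := hlt
        have : v (x ^ 2 - b * x * y + a * c * y ^ 2) < ev 0 := by
          rw [hsplit]
          exact lt_of_le_of_lt (v.map_add _ _) (sup_lt_iff.2 ⟨h1, h2⟩)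
        exact absurd hdet (ne_of_lt this)
      · exact heq
    refine ⟨?_, hxby⟩
    calc v (a * y) ≤ v (x - b * y) * ev r := hay
      _ = ev r := by rw [hxby, ev_zero, one_mul]
  · rintro ⟨hay, hxby⟩
    have hxbyne : x - b * y ≠ 0 := by
      intro h; rw [h] at hxby; simp [ev_zero] at hxby
    set B : Matrix (Fin 2) (Fin 2) F :=
      !![x + a * c * y ^ 2 / (x - b * y), c * y; 0, x - b * y] with hBdef
    set k : Matrix (Fin 2) (Fin 2) F :=
      !![1, 0; -(a * y) / (x - b * y), 1] with hkdef
    have hdetB : B.det = x ^ 2 - b * x * y + a * c * y ^ 2 := by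
      rw [hBdef, Matrix.det_fin_two_of]
      rw [add_mul, div_mul_cancel₀ _ hxbyne]
      ring
    have hvk10 : v (-(a * y) / (x - b * y)) ≤ ev r := by
      rw [div_eq_mul_inv, v.map_mul, v.map_neg, map_inv₀, hxby, ev_zero, inv_one, mul_one]
      exact hay
    rw [Set.mem_mul]
    have hk00 : k 0 0 = (1 : F) := rfl
    have hk01 : k 0 1 = (0 : F) := rfl
    have hk10 : k 1 0 = -(a * y) / (x - b * y) := rfl
    have hk11 : k 1 1 = (1 : F) := rfl
    refine ⟨B, ⟨by simp [hBdef], by rw [hdetB]; exact hdetne⟩, k, ?_, ?_⟩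
    · refine ⟨⟨?_, ?_⟩, ?_, ?_, ?_⟩
      · intro i j
        fin_cases i <;> fin_cases j
        · show v (1 : F) ≤ ev 0
          rw [v.map_one, ev_zero]
        · show v (0 : F) ≤ ev 0
          rw [v.map_zero]; exact zero_le'
        · show v (-(a * y) / (x - b * y)) ≤ ev 0
          exact le_trans hvk10 hevr_le
        · show v (1 : F) ≤ ev 0
          rw [v.map_one, ev_zero]
      · rw [hkdef, Matrix.det_fin_two_of]
        simp [ev_zero]
      · rw [hk00, sub_self, v.map_zero]; exact zero_le'
      · rw [hk11, sub_self, v.map_zero]; exact zero_le'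
      · rw [hk10]; exact hvk10
    · ext i j
      fin_cases i <;> fin_cases j <;>
        simp [hBdef, hkdef, tmat, Matrix.mul_apply, Fin.sum_univ_two] <;>
        field_simp <;> ring
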